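/- Termination of Algorithm 1: if every feasible solution in X has nonempty support, then the sequence of recorded solutions F(1), F(2), ... produced by the knockout algorithm consists of pairwise distinct elements of X, and therefore the algorithm terminates in at most |X| iterations. -/
import Mathlib


theorem algorithm1_termination
    (n m : ℕ) (X : Finset (Finset (Fin n)))
    (hX : ∀ s ∈ X, s.Nonempty)
    (F : Fin m → Finset (Fin n)) (hmem : ∀ t, F t ∈ X)
    (hstep : ∀ t' : Fin m, ∃ D : Finset (Fin n),
      (∀ u : Fin m, u < t' → (D ∩ F u).Nonempty) ∧ F t' ∩ D = ∅) :
    (∀ t u : Fin m, t ≠ u → F t ≠ F u) ∧ m ≤ X.card := by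
  have key : ∀ t u : Fin m, t < u → F t ≠ F u := by
    intro t u htu heq
    obtain ⟨D, hD1, hD2⟩ := hstep u
    have h := hD1 t htu
    rw [heq, Finset.inter_comm, hD2] at h
    exact Finset.not_nonempty_empty h
  have hinj : Function.Injective F := by
    intro t u h
    by_contra hne
    rcases lt_or_gt_of_ne hne with hlt | hgt
    · exact key t u hlt h
    · exact key u t hgt h.symm
  refine ⟨fun t u htu => fun h => htu (hinj h), ?_⟩
  calc m = Fintype.card (Fin m) := (Fintype.card_fin m).symm
    _ ≤ X.card := Fintype.card_le_of_injective (fun t => ⟨F t, hmem t⟩)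
        (fun a b h => hinj (congrArg Subtype.val h)) |>.trans_eq
        (Fintype.card_coe X)
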